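/- With f, σ, b > 0, ϑ ∈ ℝ, r = (ϑ² + b²f²/σ²)^{1/2}, fix t > 0. As ε → 0, the solution γ_ε(t) of the Riccati equation γ' = 2ϑγ − (f²/σ²)γ² + b² with γ(0) = d²/ε² converges to γ*(t) = (σ²/f²)[ϑ + r + 2r/(e^{2rt} − 1)]; more precisely |γ_ε(t) − γ*(t)| ≤ C·ε² uniformly on [τ, T] for any 0 < τ ≤ T, for some constant C depending on τ, T and the coefficients. -/

import Mathlib

/-- Core estimate with abstract quantities: if `D = d²/ε² − c`, `0 < Bτ ≤ B`,
`c·B ≤ 1` and `0 < E ≤ 1`, then the Riccati difference is `O(ε²)`. -/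
lemma stmt_7_aux (E B c D Bτ ε d : ℝ) (hE0 : 0 < E) (hE1 : E ≤ 1) (hB0 : 0 < B)
    (hBτ0 : 0 < Bτ) (hBτB : Bτ ≤ B) (hcB : c * B ≤ 1)
    (hD : D = d ^ 2 / ε ^ 2 - c) (hε : 0 < ε) (hd : 0 < d) :
    |E * (D⁻¹ + B)⁻¹ + c - (c + E * B⁻¹)| ≤ 1 / (d ^ 2 * Bτ ^ 2) * ε ^ 2 := by
  by_cases hDz : D = 0
  · rw [hDz]
    simp only [inv_zero, zero_add]
    have h : E * B⁻¹ + c - (c + E * B⁻¹) = 0 := by ring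
    rw [h, abs_zero]
    positivity
  · have h1DB : B * (d ^ 2 / ε ^ 2) ≤ 1 + D * B := by
      have h : D * B = d ^ 2 / ε ^ 2 * B - c * B := by rw [hD]; ring
      nlinarith
    have h1DBpos : 0 < 1 + D * B := lt_of_lt_of_le (by positivity) h1DB
    have hdiff : E * (D⁻¹ + B)⁻¹ + c - (c + E * B⁻¹) = -(E / ((1 + D * B) * B)) := by
      have hDB : D⁻¹ + B = (1 + D * B) / D := by field_simp
      rw [hDB, inv_div]
      field_simp
      ring
    rw [hdiff, abs_neg, abs_of_pos (by positivity)]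
    have hden : Bτ ^ 2 * d ^ 2 / ε ^ 2 ≤ (1 + D * B) * B := by
      have h1 : Bτ ^ 2 * (d ^ 2 / ε ^ 2) ≤ B ^ 2 * (d ^ 2 / ε ^ 2) := by
        have h : Bτ ^ 2 ≤ B ^ 2 := by nlinarith
        exact mul_le_mul_of_nonneg_right h (by positivity)
      have h2 : B ^ 2 * (d ^ 2 / ε ^ 2) ≤ (1 + D * B) * B := by
        nlinarith [mul_le_mul_of_nonneg_right h1DB hB0.le]
      calc Bτ ^ 2 * d ^ 2 / ε ^ 2 = Bτ ^ 2 * (d ^ 2 / ε ^ 2) := by ring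
        _ ≤ B ^ 2 * (d ^ 2 / ε ^ 2) := h1
        _ ≤ (1 + D * B) * B := h2
    have hεne : (ε:ℝ) ≠ 0 := ne_of_gt hε
    calc E / ((1 + D * B) * B) ≤ 1 / (Bτ ^ 2 * d ^ 2 / ε ^ 2) :=
          div_le_div₀ (by norm_num) hE1 (by positivity) hden
      _ = 1 / (d ^ 2 * Bτ ^ 2) * ε ^ 2 := by field_simp

set_option maxHeartbeats 2000000 in
/-- Uniform `O(ε²)` expansion of the Riccati solution with initial value `d²/ε²`:
`|γ_ε(t) − γ*(t)| ≤ C·ε²` uniformly on `[τ,T]`. -/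
theorem stmt_7 (ϑ b f σ d τ T : ℝ) (hf : 0 < f) (hσ : 0 < σ) (hb : 0 < b)
    (hd : 0 < d) (hτ : 0 < τ) (hτT : τ ≤ T)
    (r : ℝ) (hr : r = Real.sqrt (ϑ ^ 2 + b ^ 2 * f ^ 2 / σ ^ 2))
    (γε : ℝ → ℝ → ℝ) (γstar : ℝ → ℝ)
    (hγε : ∀ ε t, γε ε t =
      Real.exp (-(2 * r * t)) *
        ((d ^ 2 / ε ^ 2 - σ ^ 2 / f ^ 2 * (ϑ + r))⁻¹
          + f ^ 2 * (1 - Real.exp (-(2 * r * t))) / (2 * σ ^ 2 * r))⁻¹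
      + σ ^ 2 / f ^ 2 * (ϑ + r))
    (hγstar : ∀ t, γstar t =
      σ ^ 2 / f ^ 2 * (ϑ + r + 2 * r / (Real.exp (2 * r * t) - 1))) :
    ∃ C > 0, ∀ ε ∈ Set.Ioc (0:ℝ) 1, ∀ t ∈ Set.Icc τ T,
      |γε ε t - γstar t| ≤ C * ε ^ 2 := by
  have hr0 : 0 < r := by
    rw [hr]; apply Real.sqrt_pos.2; positivity
  have hr2 : r ^ 2 = ϑ ^ 2 + b ^ 2 * f ^ 2 / σ ^ 2 := by
    rw [hr]; exact Real.sq_sqrt (by positivity)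
  have habsϑ : |ϑ| ≤ r := by
    rw [hr, show |ϑ| = Real.sqrt (ϑ ^ 2) from (Real.sqrt_sq_eq_abs ϑ).symm]
    apply Real.sqrt_le_sqrt
    have : 0 ≤ b ^ 2 * f ^ 2 / σ ^ 2 := by positivity
    linarith
  have hrϑ : ϑ ≤ r := (abs_le.1 habsϑ).2
  have hrϑ2 : -ϑ ≤ r := by have := (abs_le.1 habsϑ).1; linarith
  have hEτ1 : Real.exp (-(2 * r * τ)) < 1 := by
    rw [Real.exp_lt_one_iff]; nlinarith
  obtain ⟨Bτ, hBτdef⟩ : ∃ x, f ^ 2 * (1 - Real.exp (-(2 * r * τ))) / (2 * σ ^ 2 * r) = x :=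
    ⟨_, rfl⟩
  have hBτ0 : 0 < Bτ := by
    rw [← hBτdef]
    exact div_pos (mul_pos (by positivity) (by linarith)) (by positivity)
  refine ⟨1 / (d ^ 2 * Bτ ^ 2), by positivity, ?_⟩
  rintro ε ⟨hε0, hε1⟩ t ⟨htτ, _⟩
  have ht0 : 0 < t := lt_of_lt_of_le hτ htτ
  rw [hγε, hγstar]
  obtain ⟨E, hEdef⟩ : ∃ x, Real.exp (-(2 * r * t)) = x := ⟨_, rfl⟩
  have hE0 : 0 < E := by rw [← hEdef]; exact Real.exp_pos _
  have hE1 : E < 1 := by rw [← hEdef, Real.exp_lt_one_iff]; nlinarith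
  have hEne : E ≠ 0 := ne_of_gt hE0
  have h1E : 1 - E ≠ 0 := sub_ne_zero.2 (ne_of_gt hE1)
  have hexp : Real.exp (2 * r * t) = E⁻¹ := by
    rw [← hEdef, ← Real.exp_neg, neg_neg]
  rw [hEdef, hexp]
  obtain ⟨B, hBdef⟩ : ∃ x, f ^ 2 * (1 - E) / (2 * σ ^ 2 * r) = x := ⟨_, rfl⟩
  have hB0 : 0 < B := by
    rw [← hBdef]
    exact div_pos (mul_pos (by positivity) (by nlinarith)) (by positivity)
  have hBτB : Bτ ≤ B := by
    have hEEτ : E ≤ Real.exp (-(2 * r * τ)) := by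
      rw [← hEdef]; apply Real.exp_le_exp.2; nlinarith
    rw [← hBτdef, ← hBdef]
    refine div_le_div₀ (mul_nonneg (sq_nonneg f) (by linarith)) ?_ (by positivity) le_rfl
    have h := mul_le_mul_of_nonneg_left hEEτ (sq_nonneg f)
    nlinarith [h]
  rw [hBdef]
  obtain ⟨c, hcdef⟩ : ∃ x, σ ^ 2 / f ^ 2 * (ϑ + r) = x := ⟨_, rfl⟩
  rw [hcdef]
  have key : σ ^ 2 / f ^ 2 * (ϑ + r + 2 * r / (E⁻¹ - 1)) = c + E * B⁻¹ := by
    rw [← hcdef, ← hBdef]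
    rw [show E⁻¹ - 1 = (1 - E) / E by field_simp]
    field_simp
  rw [key]
  have hcB : c * B ≤ 1 := by
    rw [← hcdef, ← hBdef]
    have h1 : σ ^ 2 / f ^ 2 * (ϑ + r) * (f ^ 2 * (1 - E) / (2 * σ ^ 2 * r))
        = (ϑ + r) * (1 - E) / (2 * r) := by
      field_simp
    rw [h1, div_le_one (by positivity)]
    nlinarith [mul_le_mul_of_nonneg_left (by linarith : 1 - E ≤ 1) (by linarith : 0 ≤ ϑ + r)]
  exact stmt_7_aux E B c _ Bτ ε d hE0 hE1.le hB0 hBτ0 hBτB hcB rfl hε0 hd
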